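/- Define Ψ(c, μ) := −(2α + 2β − f'(0)) + √Δ∞(μ) − 2μc for c > 0 and μ ≥ 0, where Δ∞(μ) := (2α − 2β + f'(0))² + 8αβ(1 + cosh μ). There exist c_*^∞ > 0 and μ_* > 0 such that Ψ(c_*^∞, μ_*) = 0 and ∂Ψ/∂μ (c_*^∞, μ_*) = 0; moreover: (i) if 0 < c < c_*^∞, then Ψ(c, μ) > 0 for all μ > 0; (ii) if c > c_*^∞, then the equation Ψ(c, μ) = 0 has exactly two positive roots μ₁(c) < μ_* < μ₂(c), with Ψ(c, ·) < 0 on (μ₁(c), μ₂(c)) and Ψ(c, ·) > 0 on (0, μ₁(c)) ∪ (μ₂(c), +∞). In particular c_*^∞ = min_{μ>0} (−(2α + 2β − f'(0)) + √Δ∞(μ))/(2μ) is well defined. -/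

import Mathlib

open Set Filter

noncomputable section

/-- `Δ∞(μ) = (2α − 2β + f'(0))² + 8αβ(1 + cosh μ)`, where `r` stands for `f'(0)`. -/
def ΔInf (α β r mu : ℝ) : ℝ :=
  (2 * α - 2 * β + r) ^ 2 + 8 * α * β * (1 + Real.cosh mu)

/-- `Ψ(c,μ) = −(2α + 2β − f'(0)) + √Δ∞(μ) − 2μc`. -/
def PsiInf (α β r c mu : ℝ) : ℝ :=
  -(2 * α + 2 * β - r) + Real.sqrt (ΔInf α β r mu) - 2 * mu * c

lemma secant_lt {f : ℝ → ℝ} (hf : StrictConvexOn ℝ Set.univ f) {x y z : ℝ}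
    (hxy : x < y) (hyz : y < z) :
    f y < ((z - y)/(z - x)) * f x + ((y - x)/(z - x)) * f z := by
  have hxz : x < z := hxy.trans hyz
  have h1 : (0:ℝ) < z - x := by linarith
  have ha : (0:ℝ) < (z - y)/(z - x) := div_pos (by linarith) h1
  have hb : (0:ℝ) < (y - x)/(z - x) := div_pos (by linarith) h1
  have hab : (z - y)/(z - x) + (y - x)/(z - x) = 1 := by field_simp; ring
  have := hf.2 (Set.mem_univ x) (Set.mem_univ z) (ne_of_lt hxz) ha hb hab
  have hy : ((z - y)/(z - x)) * x + ((y - x)/(z - x)) * z = y := by field_simp; ring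
  simpa [smul_eq_mul, hy] using this

set_option maxHeartbeats 4000000 in
lemma key (α β r : ℝ) (hα : 0 < α) (hβ : 0 < β) (hr : 0 < r) :
    ∃ cstar mustar : ℝ, 0 < cstar ∧ 0 < mustar ∧
      PsiInf α β r cstar mustar = 0 ∧
      deriv (fun mu => PsiInf α β r cstar mu) mustar = 0 ∧
      (∀ c : ℝ, 0 < c → c < cstar → ∀ mu : ℝ, 0 < mu →
        0 < PsiInf α β r c mu) ∧
      (∀ c : ℝ, cstar < c → ∃ mu₁ mu₂ : ℝ,
        0 < mu₁ ∧ mu₁ < mustar ∧ mustar < mu₂ ∧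
        PsiInf α β r c mu₁ = 0 ∧ PsiInf α β r c mu₂ = 0 ∧
        (∀ mu ∈ Ioo mu₁ mu₂, PsiInf α β r c mu < 0) ∧
        (∀ mu ∈ Ioo 0 mu₁, 0 < PsiInf α β r c mu) ∧
        (∀ mu : ℝ, mu₂ < mu → 0 < PsiInf α β r c mu)) ∧
      (∀ mu : ℝ, 0 < mu →
        cstar ≤ (-(2 * α + 2 * β - r) + Real.sqrt (ΔInf α β r mu)) / (2 * mu)) ∧
      (∃ mu : ℝ, 0 < mu ∧
        cstar = (-(2 * α + 2 * β - r) + Real.sqrt (ΔInf α β r mu)) / (2 * mu)) := by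
  set A : ℝ := 2 * α + 2 * β - r with hA
  set L : ℝ := 8 * α * β with hL
  set K : ℝ := (2 * α - 2 * β + r) ^ 2 + L with hK
  have hLpos : 0 < L := by positivity
  have hKpos : 0 < K := by positivity
  set h : ℝ → ℝ := fun mu => Real.sqrt (K + L * Real.cosh mu) with hh
  have hDpos : ∀ mu : ℝ, 0 < K + L * Real.cosh mu := fun mu => by
    nlinarith [Real.one_le_cosh mu]
  have hΔeq : ∀ mu : ℝ, ΔInf α β r mu = K + L * Real.cosh mu := fun mu => by
    simp only [ΔInf, hK, hL]; ring
  have hPsiEq : ∀ c mu : ℝ, PsiInf α β r c mu = -A + h mu - 2 * mu * c := fun c mu => by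
    simp only [PsiInf, hΔeq, hh, hA]
  have hsq : ∀ mu : ℝ, h mu ^ 2 = K + L * Real.cosh mu := fun mu =>
    Real.sq_sqrt (hDpos mu).le
  have hhpos : ∀ mu : ℝ, 0 < h mu := fun mu => Real.sqrt_pos.mpr (hDpos mu)
  have hKL : K + L = A ^ 2 + 8 * α * r := by rw [hK, hL, hA]; ring
  have hAlt : ∀ mu : ℝ, A < h mu := by
    intro mu
    by_contra hc
    push_neg at hc
    nlinarith [hsq mu, hhpos mu, Real.one_le_cosh mu]
  have hmono0 : ∀ mu : ℝ, h 0 ≤ h mu := fun mu => by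
    apply Real.sqrt_le_sqrt
    have := Real.one_le_cosh mu
    simp only [Real.cosh_zero]
    nlinarith
  set P0 : ℝ := h 0 - A with hP0
  have hP0pos : 0 < P0 := sub_pos.mpr (hAlt 0)
  have hnum : ∀ mu : ℝ, P0 ≤ -A + h mu := fun mu => by
    have := hmono0 mu; simp only [hP0]; linarith
  -- derivatives
  have hasD : ∀ mu : ℝ, HasDerivAt (fun x => K + L * Real.cosh x) (L * Real.sinh mu) mu :=
    fun mu => ((Real.hasDerivAt_cosh mu).const_mul L).const_add K
  have hash : ∀ mu : ℝ, HasDerivAt h (L * Real.sinh mu / (2 * h mu)) mu := fun mu =>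
    (hasD mu).sqrt (hDpos mu).ne'
  set Φ : ℝ → ℝ → ℝ := fun c mu => -A + h mu - 2 * mu * c with hΦdef
  have hΦ : ∀ c : ℝ, (fun mu => PsiInf α β r c mu) = Φ c := fun c =>
    funext fun mu => hPsiEq c mu
  have hasΦ : ∀ c mu : ℝ, HasDerivAt (Φ c) (L * Real.sinh mu / (2 * h mu) - 2 * c) mu := by
    intro c mu
    have h1 : HasDerivAt (fun mu : ℝ => 2 * mu * c) (2 * c) mu := by
      simpa using ((hasDerivAt_id mu).const_mul 2).mul_const c
    exact (((hash mu).const_add (-A)).sub h1)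
  have hcontΦ : ∀ c : ℝ, Continuous (Φ c) := by
    intro c
    apply Continuous.sub
    · exact continuous_const.add (Real.continuous_sqrt.comp (by continuity))
    · continuity
  have hderivΦ : ∀ c : ℝ, deriv (Φ c) = fun mu => L * Real.sinh mu / (2 * h mu) - 2 * c :=
    fun c => funext fun mu => (hasΦ c mu).deriv
  have hasq : ∀ c mu : ℝ, HasDerivAt (deriv (Φ c))
      ((L * Real.cosh mu * (2 * h mu) - L * Real.sinh mu * (2 * (L * Real.sinh mu / (2 * h mu))))
        / (2 * h mu) ^ 2) mu := by
    intro c mu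
    rw [hderivΦ c]
    have hne : (2 : ℝ) * h mu ≠ 0 := by positivity
    exact (((Real.hasDerivAt_sinh mu).const_mul L).div ((hash mu).const_mul 2) hne).sub_const _
  have hEpos : ∀ mu : ℝ,
      0 < (L * Real.cosh mu * (2 * h mu) - L * Real.sinh mu * (2 * (L * Real.sinh mu / (2 * h mu))))
        / (2 * h mu) ^ 2 := by
    intro mu
    have hH := hhpos mu
    apply div_pos _ (by positivity)
    have heq : L * Real.cosh mu * (2 * h mu)
        - L * Real.sinh mu * (2 * (L * Real.sinh mu / (2 * h mu)))
        = (2 * L * Real.cosh mu * h mu ^ 2 - L ^ 2 * Real.sinh mu ^ 2) / h mu := by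
      field_simp
    rw [heq]
    apply div_pos _ hH
    have h1 := hsq mu
    have h2 := Real.cosh_sq mu
    have h3 := Real.one_le_cosh mu
    have heq2 : 2 * L * Real.cosh mu * h mu ^ 2 - L ^ 2 * Real.sinh mu ^ 2
        = 2 * L * K * Real.cosh mu + L ^ 2 * Real.cosh mu ^ 2 + L ^ 2 := by
      rw [h1, show Real.sinh mu ^ 2 = Real.cosh mu ^ 2 - 1 by linarith]; ring
    rw [heq2]
    have t1 : 0 < 2 * L * K * Real.cosh mu :=
      mul_pos (mul_pos (mul_pos (by norm_num) hLpos) hKpos) (Real.cosh_pos mu)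
    have t2 : 0 ≤ L ^ 2 * Real.cosh mu ^ 2 :=
      mul_nonneg (sq_nonneg L) (sq_nonneg (Real.cosh mu))
    have t3 : 0 < L ^ 2 := pow_pos hLpos 2
    linarith
  have hconv : ∀ c : ℝ, StrictConvexOn ℝ Set.univ (Φ c) := by
    intro c
    apply strictConvexOn_univ_of_deriv2_pos (hcontΦ c)
    intro mu
    have : deriv^[2] (Φ c) mu = deriv (deriv (Φ c)) mu := rfl
    rw [this, (hasq c mu).deriv]
    exact hEpos mu
  -- growth estimates
  set s : ℝ := Real.sqrt (L / 2) with hs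
  have hspos : 0 < s := Real.sqrt_pos.mpr (by positivity)
  have hs2 : s ^ 2 = L / 2 := Real.sq_sqrt (by positivity)
  have hlb : ∀ mu : ℝ, 0 ≤ mu → s * (mu ^ 2 / 8) ≤ h mu := by
    intro mu hmu
    have he1 : mu ^ 2 / 8 ≤ Real.exp (mu / 2) := by
      have hq := Real.quadratic_le_exp_of_nonneg (by linarith : (0:ℝ) ≤ mu / 2)
      have hxx : (1:ℝ) + mu / 2 + (mu / 2) ^ 2 / 2 = 1 + mu / 2 + mu ^ 2 / 8 := by ring
      rw [hxx] at hq
      linarith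
    have he2 : (mu ^ 2 / 8) ^ 2 ≤ Real.exp mu := by
      have h0 : (0:ℝ) ≤ mu ^ 2 / 8 := by positivity
      have hp := pow_le_pow_left₀ h0 he1 2
      have hxx : Real.exp (mu / 2) ^ 2 = Real.exp mu := by
        rw [sq, ← Real.exp_add]; congr 1; ring
      rwa [hxx] at hp
    have hch : Real.exp mu / 2 ≤ Real.cosh mu := by
      rw [Real.cosh_eq]
      have := (Real.exp_pos (-mu)).le
      linarith
    have hsq' : (s * (mu ^ 2 / 8)) ^ 2 ≤ h mu ^ 2 := by
      rw [hsq mu]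
      have hxx : (s * (mu ^ 2 / 8)) ^ 2 = L / 2 * (mu ^ 2 / 8) ^ 2 := by
        rw [mul_pow, hs2]
      rw [hxx]
      calc L / 2 * (mu ^ 2 / 8) ^ 2 ≤ L / 2 * Real.exp mu :=
            mul_le_mul_of_nonneg_left he2 (by positivity)
        _ = L * (Real.exp mu / 2) := by ring
        _ ≤ L * Real.cosh mu := mul_le_mul_of_nonneg_left hch hLpos.le
        _ ≤ K + L * Real.cosh mu := by linarith
    exact (pow_le_pow_iff_left₀ (by positivity) (hhpos mu).le two_ne_zero).mp hsq'
  have hgrow : ∀ C : ℝ, ∃ b : ℝ, 1 ≤ b ∧ ∀ mu : ℝ, b ≤ mu → C < (-A + h mu) / (2 * mu) := by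
    intro C
    refine ⟨max 1 (8 * (2 * |C| + |A| + 1) / s), le_max_left _ _, ?_⟩
    intro mu hmu
    have hmu1 : 1 ≤ mu := le_trans (le_max_left _ _) hmu
    have hmu0 : 0 < mu := by linarith
    have hmu2 : 8 * (2 * |C| + |A| + 1) / s ≤ mu := le_trans (le_max_right _ _) hmu
    have hsb : 8 * (2 * |C| + |A| + 1) ≤ mu * s := (div_le_iff₀ hspos).mp hmu2
    have hlb' := hlb mu hmu0.le
    rw [lt_div_iff₀ (by linarith : (0:ℝ) < 2 * mu)]
    have habs1 : A ≤ |A| := le_abs_self A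
    have habs2 : C ≤ |C| := le_abs_self C
    have habs3 : 0 ≤ |C| := abs_nonneg C
    have habs4 : 0 ≤ |A| := abs_nonneg A
    nlinarith [mul_le_mul_of_nonneg_left hsb hmu0.le,
      mul_nonneg (sub_nonneg.2 hmu1) habs4, mul_nonneg (sub_nonneg.2 habs2) hmu0.le,
      mul_nonneg (sub_nonneg.2 hmu1) habs3]
  -- the function g and its minimizer
  set g : ℝ → ℝ := fun mu => (-A + h mu) / (2 * mu) with hg
  have hrel : ∀ c mu : ℝ, 0 < mu → Φ c mu = 2 * mu * (g mu - c) := by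
    intro c mu hmu
    simp only [hΦdef, hg]
    field_simp
  have hgpos : ∀ mu : ℝ, 0 < mu → 0 < g mu := by
    intro mu hmu
    exact div_pos (by linarith [hnum mu]) (by linarith)
  obtain ⟨b, hb1, hbprop⟩ := hgrow (g 1)
  have hg1pos : 0 < g 1 := hgpos 1 one_pos
  set a : ℝ := min (P0 / (2 * (g 1 + 1))) 1 with ha'
  have hapos : 0 < a := lt_min (by positivity) one_pos
  have ha1 : a ≤ 1 := min_le_right _ _
  have hcontg : ContinuousOn g (Icc a b) := by
    apply ContinuousOn.div
    · exact (continuous_const.add (Real.continuous_sqrt.comp (by continuity))).continuousOn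
    · exact (continuous_const.mul continuous_id).continuousOn
    · intro x hx
      have : 0 < x := lt_of_lt_of_le hapos hx.1
      positivity
  obtain ⟨mustar, hmem, hminOn⟩ := (isCompact_Icc).exists_isMinOn
      ⟨1, mem_Icc.mpr ⟨ha1, hb1⟩⟩ hcontg
  have hmustar : 0 < mustar := lt_of_lt_of_le hapos hmem.1
  set cstar : ℝ := g mustar with hcstar
  have hcstarpos : 0 < cstar := hgpos _ hmustar
  have hming : ∀ mu : ℝ, 0 < mu → cstar ≤ g mu := by
    intro mu hmu
    have hc1 : cstar ≤ g 1 := hminOn (mem_Icc.mpr ⟨ha1, hb1⟩)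
    rcases le_or_gt mu b with hmub | hmub
    · rcases le_or_gt a mu with hamu | hamu
      · exact hminOn (mem_Icc.mpr ⟨hamu, hmub⟩)
      · have h2 : mu ≤ P0 / (2 * (g 1 + 1)) := le_trans hamu.le (min_le_left _ _)
        have h3 : mu * (2 * (g 1 + 1)) ≤ P0 := by
          rw [← le_div_iff₀ (by positivity : (0:ℝ) < 2 * (g 1 + 1))]
          exact h2
        have h4 : P0 / (2 * mu) ≤ g mu := by
          rw [hg]
          exact (div_le_div_iff_of_pos_right (by linarith)).mpr (hnum mu)
        have h5 : g 1 + 1 ≤ P0 / (2 * mu) := by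
          rw [le_div_iff₀ (by linarith : (0:ℝ) < 2 * mu)]
          nlinarith
        linarith
    · have := hbprop mu hmub.le
      linarith
  have hΦstar0 : Φ cstar mustar = 0 := by
    rw [hrel _ _ hmustar, ← hcstar]; ring
  refine ⟨cstar, mustar, hcstarpos, hmustar, ?_, ?_, ?_, ?_, ?_, ⟨mustar, hmustar, ?_⟩⟩
  · rw [hPsiEq]; exact hΦstar0
  · rw [hΦ cstar]
    have hloc : IsLocalMin (Φ cstar) mustar := by
      have hnb : Ioi (0:ℝ) ∈ nhds mustar := Ioi_mem_nhds hmustar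
      filter_upwards [hnb] with x hx
      rw [hΦstar0, hrel _ _ hx]
      have hx' : (0:ℝ) < x := hx
      have := hming x hx'
      nlinarith [mul_nonneg (by linarith : (0:ℝ) ≤ 2 * x) (by linarith : (0:ℝ) ≤ g x - cstar)]
    exact hloc.deriv_eq_zero
  · intro c hc hcc mu hmu
    rw [hPsiEq]
    have h1 : 0 < Φ c mu := by
      rw [hrel _ _ hmu]
      have := hming mu hmu
      nlinarith
    exact h1
  · intro c hc
    have hΦneg : Φ c mustar < 0 := by
      rw [hrel _ _ hmustar]
      have : g mustar - c < 0 := by rw [← hcstar]; linarith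
      nlinarith
    have hΦ0 : 0 < Φ c 0 := by
      have hx : Φ c 0 = -A + h 0 := by simp [hΦdef]
      rw [hx]
      linarith [hAlt 0]
    obtain ⟨mu₁, hmu₁mem, hmu₁root⟩ :=
      intermediate_value_Ioo' hmustar.le (hcontΦ c).continuousOn ⟨hΦneg, hΦ0⟩
    obtain ⟨b', hb'1, hb'prop⟩ := hgrow c
    have hT1 : mustar < max b' (mustar + 1) := lt_of_lt_of_le (lt_add_one _) (le_max_right _ _)
    have hTpos : (0:ℝ) < max b' (mustar + 1) := lt_trans hmustar hT1
    have hΦT : 0 < Φ c (max b' (mustar + 1)) := by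
      rw [hrel _ _ hTpos]
      have := hb'prop (max b' (mustar + 1)) (le_max_left _ _)
      nlinarith
    obtain ⟨mu₂, hmu₂mem, hmu₂root⟩ :=
      intermediate_value_Ioo hT1.le (hcontΦ c).continuousOn ⟨hΦneg, hΦT⟩
    have hmu12 : mu₁ < mu₂ := lt_trans hmu₁mem.2 hmu₂mem.1
    refine ⟨mu₁, mu₂, hmu₁mem.1, hmu₁mem.2, hmu₂mem.1, ?_, ?_, ?_, ?_, ?_⟩
    · rw [hPsiEq]; exact hmu₁root
    · rw [hPsiEq]; exact hmu₂root
    · intro mu hmu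
      have hsec := secant_lt (hconv c) hmu.1 hmu.2
      rw [hmu₁root, hmu₂root] at hsec
      rw [hPsiEq]
      have hgoal : Φ c mu < 0 := by simpa using hsec
      exact hgoal
    · intro mu hmu
      have hsec := secant_lt (hconv c) hmu.2 hmu12
      rw [hmu₁root, hmu₂root] at hsec
      have ha2 : 0 < (mu₂ - mu₁) / (mu₂ - mu) := div_pos (by linarith) (by linarith [hmu.2])
      rw [hPsiEq]
      have hgoal : 0 < Φ c mu := by
        by_contra hcon
        push_neg at hcon
        nlinarith [hsec, mul_nonneg ha2.le (neg_nonneg.mpr hcon)]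
      exact hgoal
    · intro mu hmu
      have hsec := secant_lt (hconv c) hmu12 hmu
      rw [hmu₁root, hmu₂root] at hsec
      have hb2 : 0 < (mu₂ - mu₁) / (mu - mu₁) := div_pos (by linarith) (by linarith)
      rw [hPsiEq]
      have hgoal : 0 < Φ c mu := by
        by_contra hcon
        push_neg at hcon
        nlinarith [hsec, mul_nonneg hb2.le (neg_nonneg.mpr hcon)]
      exact hgoal
  · intro mu hmu
    rw [hΔeq mu]
    exact hming mu hmu
  · rw [hΔeq mustar]

/-- **The asymptotic spreading speed `c_*^∞` is well defined**: there exist `c_*^∞ > 0` and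
`μ_* > 0` with `Ψ(c_*^∞, μ_*) = 0`, `∂_μ Ψ(c_*^∞, μ_*) = 0`; for `0 < c < c_*^∞` one has
`Ψ(c,·) > 0` on `(0,∞)`, while for `c > c_*^∞` the equation `Ψ(c,μ) = 0` has exactly two
positive roots `μ₁ < μ_* < μ₂` with `Ψ(c,·) < 0` on `(μ₁,μ₂)` and `Ψ(c,·) > 0` on
`(0,μ₁) ∪ (μ₂,∞)`; in particular `c_*^∞ = min_{μ>0} (−(2α+2β−f'(0)) + √Δ∞(μ))/(2μ)`. -/
theorem asymptotic_speed_well_defined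
    (α β : ℝ) (hα : 0 < α) (hβ : 0 < β)
    (f : ℝ → ℝ) (hf : ContDiff ℝ 1 f) (hf0 : f 0 = 0) (hf1 : f 1 = 0)
    (hfpos : ∀ u ∈ Ioo (0:ℝ) 1, 0 < f u ∧ f u ≤ deriv f 0 * u)
    (hr : 0 < deriv f 0) :
    ∃ cstar mustar : ℝ, 0 < cstar ∧ 0 < mustar ∧
      PsiInf α β (deriv f 0) cstar mustar = 0 ∧
      deriv (fun mu => PsiInf α β (deriv f 0) cstar mu) mustar = 0 ∧
      (∀ c : ℝ, 0 < c → c < cstar → ∀ mu : ℝ, 0 < mu →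
        0 < PsiInf α β (deriv f 0) c mu) ∧
      (∀ c : ℝ, cstar < c → ∃ mu₁ mu₂ : ℝ,
        0 < mu₁ ∧ mu₁ < mustar ∧ mustar < mu₂ ∧
        PsiInf α β (deriv f 0) c mu₁ = 0 ∧ PsiInf α β (deriv f 0) c mu₂ = 0 ∧
        (∀ mu ∈ Ioo mu₁ mu₂, PsiInf α β (deriv f 0) c mu < 0) ∧
        (∀ mu ∈ Ioo 0 mu₁, 0 < PsiInf α β (deriv f 0) c mu) ∧
        (∀ mu : ℝ, mu₂ < mu → 0 < PsiInf α β (deriv f 0) c mu)) ∧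
      (∀ mu : ℝ, 0 < mu →
        cstar ≤ (-(2 * α + 2 * β - deriv f 0) + Real.sqrt (ΔInf α β (deriv f 0) mu))
          / (2 * mu)) ∧
      (∃ mu : ℝ, 0 < mu ∧
        cstar = (-(2 * α + 2 * β - deriv f 0) + Real.sqrt (ΔInf α β (deriv f 0) mu))
          / (2 * mu)) :=
  key α β (deriv f 0) hα hβ hr
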